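/- For every n >= 3, the lowering map alpha = U beta U D_k -> beta U D_{k-1} is a bijection from the set of prime DAP of length n onto the set of all DAP of length n-1; in particular, the number of prime DAP of length n equals the number of DAP of length n-1. -/

import Mathlib

open PowerSeries

/-- A valid step sequence: each step is an up-step `1` or a down-step `-k` (`k ≥ 1`),
and no two down-steps are consecutive. -/
def GoodSteps (p : List ℤ) : Prop :=
  (∀ s ∈ p, s = 1 ∨ s ≤ -1) ∧ List.Chain' (fun a b => a = 1 ∨ b = 1) p

/-- A Dyck path with air pockets: nonempty, valid steps, ends on the x-axis,
stays weakly above the x-axis. -/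
def IsDAP (p : List ℤ) : Prop :=
  p ≠ [] ∧ GoodSteps p ∧ p.sum = 0 ∧ ∀ i, 0 ≤ (p.take i).sum

/-- A grand Dyck path with air pockets: valid steps, ends on the x-axis
(possibly going below it); the empty path is allowed. -/
def IsGDAP (p : List ℤ) : Prop := GoodSteps p ∧ p.sum = 0

/-- Number of DAP of length `n`. -/
noncomputable def dapCount (n : ℕ) : ℕ :=
  Nat.card {p : List ℤ // IsDAP p ∧ p.length = n}

/-- A prime DAP: a DAP ending with a down-step `D_k`, `k ≥ 2`, that returns to the
x-axis only at its final point. -/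
def IsPrimeDAP (p : List ℤ) : Prop :=
  IsDAP p ∧ (∃ d, p.getLast? = some d ∧ d ≤ -2) ∧
    ∀ i, 0 < i → i < p.length → 0 < (p.take i).sum

/-- The lowering map: `U β U D_k ↦ β U D_{k-1}` (drop the initial up-step and
increase the final down-step by one). -/
def lowerFun (p : List ℤ) : List ℤ := p.tail.dropLast ++ [p.getLastD 0 + 1]

noncomputable def primeCount (n : ℕ) : ℕ :=
  Nat.card {p : List ℤ // IsPrimeDAP p ∧ p.length = n}

lemma take_two (l : List ℤ) (x y : ℤ) (i : ℕ) (hi : i ≤ l.length + 1) :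
    (l ++ [x, y]).take i = (l ++ [x]).take i := by
  rw [show l ++ [x, y] = (l ++ [x]) ++ [y] by simp,
    List.take_append_of_le_length (by simpa using hi)]

lemma lower_eq (l : List ℤ) (d : ℤ) :
    lowerFun (1 :: (l ++ [1, d])) = l ++ [1, d + 1] := by
  unfold lowerFun
  have h2 : (l ++ [1, d]).dropLast = l ++ [1] := by
    rw [show l ++ [1, d] = (l ++ [1]) ++ [d] by simp, List.dropLast_concat]
  have h3 : (1 :: (l ++ [1, d])).getLastD 0 = d := by
    rw [show (1 : ℤ) :: (l ++ [1, d]) = ((1 :: l) ++ [1]) ++ [d] by simp,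
      List.getLastD_concat]
  rw [List.tail_cons, h2, h3]
  simp

lemma dap_decomp {q : List ℤ} (hq : IsDAP q) (h2 : 2 ≤ q.length) :
    ∃ l e, q = l ++ [1, e] ∧ e ≤ -1 := by
  obtain ⟨hne, ⟨hsteps, hchain⟩, hsum, hpos⟩ := hq
  rcases q.eq_nil_or_concat with rfl | ⟨l', e, rfl⟩
  · simp at hne
  simp only [List.concat_eq_append] at *
  have he : e ≤ -1 := by
    rcases hsteps e (by simp) with h1 | h1
    · exfalso
      have h0 := hpos l'.length
      rw [List.take_left] at h0
      simp [h1] at hsum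
      omega
    · exact h1
  rcases l'.eq_nil_or_concat with rfl | ⟨l, a, rfl⟩
  · simp at h2
  simp only [List.concat_eq_append] at *
  have hc : List.IsChain _ _ := hchain
  rw [show (l ++ [a]) ++ [e] = l ++ [a, e] by simp, List.isChain_append] at hc
  have hae : a = 1 ∨ e = 1 := by simpa using hc.2.1
  have ha : a = 1 := by rcases hae with h | h; exact h; omega
  exact ⟨l, e, by simp [ha], he⟩

lemma prime_decomp {p : List ℤ} (hp : IsPrimeDAP p) (h3 : 3 ≤ p.length) :
    ∃ l d, p = 1 :: (l ++ [1, d]) ∧ d ≤ -2 := by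
  obtain ⟨⟨hne, ⟨hsteps, hchain⟩, hsum, hpos⟩, ⟨d, hlast, hd⟩, hstrict⟩ := hp
  rcases p with _ | ⟨h, t⟩
  · simp at hne
  have hh : h = 1 := by
    have h1 := hstrict 1 one_pos (by simp at h3 ⊢; omega)
    simp at h1
    rcases hsteps h (by simp) with h' | h' <;> omega
  rcases t.eq_nil_or_concat with rfl | ⟨t', d', rfl⟩
  · simp at h3
  simp only [List.concat_eq_append] at *
  rcases t'.eq_nil_or_concat with rfl | ⟨l, a, rfl⟩
  · simp at h3
  simp only [List.concat_eq_append] at *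
  have hd' : d' = d := by
    have hg : (h :: ((l ++ [a]) ++ [d'])).getLast? = some d' := by
      rw [show h :: ((l ++ [a]) ++ [d']) = (h :: (l ++ [a])) ++ [d'] by simp,
        List.getLast?_concat]
    rw [hlast] at hg
    exact (Option.some_injective _ hg).symm
  have hc : List.IsChain _ _ := hchain
  rw [show h :: ((l ++ [a]) ++ [d']) = (h :: l) ++ [a, d'] by simp,
    List.isChain_append] at hc
  have hae : a = 1 ∨ d' = 1 := by simpa using hc.2.1
  have ha : a = 1 := by rcases hae with h' | h'; exact h'; omega
  exact ⟨l, d, by simp [hh, ha, hd'], hd⟩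

lemma lower_mem {l : List ℤ} {d : ℤ} (hd : d ≤ -2)
    (hp : IsPrimeDAP (1 :: (l ++ [1, d]))) : IsDAP (l ++ [1, d + 1]) := by
  obtain ⟨⟨hne, ⟨hsteps, hchain⟩, hsum, hpos⟩, _, hstrict⟩ := hp
  have hsl : l.sum = -2 - d := by simp at hsum; linarith
  refine ⟨by simp, ⟨?_, ?_⟩, ?_, ?_⟩
  · intro s hs
    rcases List.mem_append.mp hs with hs | hs
    · exact hsteps s (by simp [hs])
    · simp at hs
      rcases hs with rfl | rfl
      · left; rfl
      · right; omega
  · show List.IsChain _ _; rw [List.isChain_append]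
    refine ⟨?_, by simp, ?_⟩
    · have h2 : List.Chain' (fun a b => a = 1 ∨ b = 1) (l ++ [1, d]) := hchain.tail
      exact (List.isChain_append.mp h2).1
    · intro x hx y hy
      simp at hy
      subst hy
      right; rfl
  · simp; linarith
  · intro i
    by_cases hi : i ≤ l.length + 1
    · have h1 : (l ++ [1, d + 1]).take i = (l ++ [1, d]).take i := by
        rw [take_two _ _ _ _ hi, take_two _ _ _ _ hi]
      have h2 := hstrict (i + 1) (by omega) (by simp; omega)
      have h3 : ((1:ℤ) :: (l ++ [1, d])).take (i + 1) = 1 :: (l ++ [1, d]).take i := rfl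
      rw [h3] at h2
      simp at h2
      rw [h1]
      linarith
    · rw [List.take_of_length_le (by simp; omega)]
      simp
      linarith

lemma raise_mem {l : List ℤ} {e : ℤ} (he : e ≤ -1)
    (hq : IsDAP (l ++ [1, e])) : IsPrimeDAP (1 :: (l ++ [1, e - 1])) := by
  obtain ⟨hne, ⟨hsteps, hchain⟩, hsum, hpos⟩ := hq
  have hsl : l.sum = -1 - e := by simp at hsum; linarith
  have key : ∀ i, 0 < i → i < l.length + 3 →
      0 < (((1:ℤ) :: (l ++ [1, e - 1])).take i).sum := by
    intro i hi hi'
    obtain ⟨j, rfl⟩ : ∃ j, i = j + 1 := ⟨i - 1, by omega⟩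
    have h3 : ((1:ℤ) :: (l ++ [1, e - 1])).take (j + 1) = 1 :: (l ++ [1, e - 1]).take j := rfl
    rw [h3]
    have hj : j ≤ l.length + 1 := by omega
    have h4 : (l ++ [1, e - 1]).take j = (l ++ [1, e]).take j := by
      rw [take_two _ _ _ _ hj, take_two _ _ _ _ hj]
    have h5 := hpos j
    simp [h4]
    linarith
  refine ⟨⟨by simp, ⟨?_, ?_⟩, ?_, ?_⟩, ⟨e - 1, ?_, by omega⟩, ?_⟩
  · intro s hs
    simp at hs
    rcases hs with rfl | hs | rfl | rfl
    · left; rfl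
    · exact hsteps s (by simp [hs])
    · left; rfl
    · right; omega
  · show List.IsChain _ _; rw [List.isChain_cons]
    refine ⟨?_, ?_⟩
    · intro y hy; left; rfl
    · rw [List.isChain_append]
      refine ⟨(List.isChain_append.mp hchain).1, by simp, ?_⟩
      intro x hx y hy
      simp at hy
      subst hy
      right; rfl
  · simp; linarith
  · intro i
    rcases Nat.eq_zero_or_pos i with rfl | hi
    · simp
    by_cases hi' : i < l.length + 3
    · exact le_of_lt (key i hi hi')
    · rw [List.take_of_length_le (by simp; omega)]
      simp
      linarith
  · rw [show (1:ℤ) :: (l ++ [1, e - 1]) = ((1 :: l) ++ [1]) ++ [e - 1] by simp,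
      List.getLast?_concat]
  · intro i hi hi'
    exact key i hi (by simp at hi'; omega)

/-- for every `n ≥ 3`, the lowering map is a bijection from prime DAP of
length `n` onto DAP of length `n-1`; in particular the cardinalities agree. -/
theorem stmt1 : ∀ n : ℕ, 3 ≤ n →
    Set.BijOn lowerFun {p : List ℤ | IsPrimeDAP p ∧ p.length = n}
      {q : List ℤ | IsDAP q ∧ q.length = n - 1} ∧
    primeCount n = dapCount (n - 1) := by
  intro n hn
  have hbij : Set.BijOn lowerFun {p : List ℤ | IsPrimeDAP p ∧ p.length = n}
      {q : List ℤ | IsDAP q ∧ q.length = n - 1} := by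
    refine ⟨?_, ?_, ?_⟩
    · rintro p ⟨hp, hlen⟩
      obtain ⟨l, d, rfl, hd⟩ := prime_decomp hp (by omega)
      rw [lower_eq]
      exact ⟨lower_mem hd hp, by simp at hlen ⊢; omega⟩
    · rintro p1 ⟨hp1, hl1⟩ p2 ⟨hp2, hl2⟩ heq
      obtain ⟨l1, d1, rfl, hd1⟩ := prime_decomp hp1 (by omega)
      obtain ⟨l2, d2, rfl, hd2⟩ := prime_decomp hp2 (by omega)
      rw [lower_eq, lower_eq] at heq
      obtain ⟨h1, h2⟩ := List.append_inj' heq rfl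
      simp at h2
      have hd : d1 = d2 := by omega
      subst h1; subst hd
      rfl
    · rintro q ⟨hq, hlen⟩
      obtain ⟨l, e, rfl, he⟩ := dap_decomp hq (by omega)
      refine ⟨1 :: (l ++ [1, e - 1]), ⟨raise_mem he hq, ?_⟩, ?_⟩
      · simp at hlen ⊢; omega
      · rw [lower_eq]; simp
  exact ⟨hbij, Nat.card_congr (Set.BijOn.equiv lowerFun hbij)⟩
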